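/- For the matrix-product stationary measure of the boundary driven SSEP, the weight is monotone under moving a particle to the right: if η(x) = 1 and η(x+1) = 0, then ω_N(σ^{x,x+1}η) - ω_N(η) = -ω_{N-1}(ξ) - ω_{N-1}(ζ) ≤ 0, where ξ, ζ are obtained from η by replacing the pair (η(x), η(x+1)) by a single site with value 1, respectively 0. Consequently, among configurations with prescribed particle numbers in each of finitely many intervals, the stationary probability is maximized by the configuration with all particles at the left-most positions in each interval and minimized by the right-most configuration. -/

import Mathlib

/-- Matrix-product (DEHP) representation of the stationary measure of the
boundary driven SSEP. Let `D, E` be operators on a real vector space, `v` a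
vector and `w` a linear functional satisfying the algebra
`DE - ED = D + E`, `((1-β)D - βE)v = v`, `w ∘ (αE - (1-α)D) = w`, and let
`ω(l) = w(∏ₓ (η(x)D + (1-η(x))E) v)` be the (nonnegative) weight of a
configuration `l`, and `μ(l) = ω(l)/w((D+E)^{|l|} v)` the stationary
probability.  Then the weight is monotone under moving a particle to the
right: if a configuration has a particle at `x` and a hole at `x+1`,
`ω(swapped) - ω = -ω(ξ) - ω(ζ) ≤ 0`, where `ξ, ζ` are obtained by merging
the pair into a single occupied, resp. empty, site.  Consequently, among
configurations with prescribed particle numbers in each of finitely many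
intervals, the stationary probability is maximal for the configuration with
all particles at the left-most positions of each interval and minimal for
the right-most one. -/
theorem stmt19 {M : Type*} [AddCommGroup M] [Module ℝ M]
    (α β : ℝ) (hα : 0 < α) (hαβ : α ≤ β) (hβ : β < 1)
    (D E : Module.End ℝ M) (v : M) (w : M →ₗ[ℝ] ℝ)
    (halg : D * E - E * D = D + E)
    (hV : ((1 - β) • D - β • E) v = v)
    (hW : ∀ u : M, w (((α • E - (1 - α) • D : Module.End ℝ M)) u) = w u)
    (ω : List Bool → ℝ)
    (hω : ∀ l : List Bool, ω l = w ((l.map fun b => if b then D else E).prod v))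
    (hpos : ∀ l : List Bool, 0 ≤ ω l)
    (hZ : ∀ n : ℕ, 0 < w (((D + E) ^ n : Module.End ℝ M) v)) :
    let μ : List Bool → ℝ := fun l => ω l / w (((D + E) ^ l.length : Module.End ℝ M) v)
    (∀ l₁ l₂ : List Bool,
      ω (l₁ ++ [false, true] ++ l₂) - ω (l₁ ++ [true, false] ++ l₂)
          = -ω (l₁ ++ [true] ++ l₂) - ω (l₁ ++ [false] ++ l₂) ∧
      ω (l₁ ++ [false, true] ++ l₂) ≤ ω (l₁ ++ [true, false] ++ l₂)) ∧
    (∀ blocks : List (ℕ × ℕ), (∀ p ∈ blocks, p.2 ≤ p.1) →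
      ∀ config : List (List Bool),
        List.Forall₂
          (fun (b : List Bool) (p : ℕ × ℕ) => b.length = p.1 ∧ b.count true = p.2)
          config blocks →
        μ ((blocks.map fun p =>
              List.replicate (p.1 - p.2) false ++ List.replicate p.2 true).flatten)
          ≤ μ (config.flatten) ∧
        μ (config.flatten)
          ≤ μ ((blocks.map fun p =>
              List.replicate p.2 true ++ List.replicate (p.1 - p.2) false).flatten)) := by
  intro μ
  -- The key algebraic identity from `DE - ED = D + E`.
  have key : ∀ l₁ l₂ : List Bool,
      ω (l₁ ++ [false, true] ++ l₂) - ω (l₁ ++ [true, false] ++ l₂)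
          = -ω (l₁ ++ [true] ++ l₂) - ω (l₁ ++ [false] ++ l₂) := by
    intro l₁ l₂
    have hED : E * D = D * E - (D + E) := by rw [← halg]; abel
    set f : Bool → Module.End ℝ M := fun b => if b then D else E with hf
    have expand : ∀ m : List Bool,
        ω (l₁ ++ m ++ l₂) = w (((l₁.map f).prod * (m.map f).prod * (l₂.map f).prod) v) := by
      intro m
      rw [hω, List.map_append, List.map_append, List.prod_append, List.prod_append]
    rw [expand, expand, expand, expand]
    have e1 : ([false, true].map f).prod = E * D := by simp [hf]
    have e2 : ([true, false].map f).prod = D * E := by simp [hf]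
    have e3 : ([true].map f).prod = D := by simp [hf]
    have e4 : ([false].map f).prod = E := by simp [hf]
    rw [e1, e2, e3, e4]
    set P₁ := (l₁.map f).prod
    set P₂ := (l₂.map f).prod
    have hk : P₁ * (E * D) * P₂ - P₁ * (D * E) * P₂
        = -(P₁ * D * P₂) - P₁ * E * P₂ := by rw [hED]; noncomm_ring
    have := congrArg (fun A : Module.End ℝ M => w (A v)) hk
    simpa [LinearMap.sub_apply, LinearMap.neg_apply, map_sub, map_neg] using this
  -- the swap inequality
  have S : ∀ l₁ l₂ : List Bool,
      ω (l₁ ++ [false, true] ++ l₂) ≤ ω (l₁ ++ [true, false] ++ l₂) := by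
    intro l₁ l₂
    have := key l₁ l₂
    have h1 := hpos (l₁ ++ [true] ++ l₂)
    have h2 := hpos (l₁ ++ [false] ++ l₂)
    linarith
  -- moving a particle left across `m` holes increases the weight
  have Mt : ∀ (m : ℕ) (l₁ l₂ : List Bool),
      ω (l₁ ++ List.replicate m false ++ true :: l₂)
        ≤ ω (l₁ ++ true :: List.replicate m false ++ l₂) := by
    intro m
    induction m with
    | zero => intro l₁ l₂; simp
    | succ m ih =>
      intro l₁ l₂
      calc ω (l₁ ++ List.replicate (m+1) false ++ true :: l₂)
          = ω ((l₁ ++ [false]) ++ List.replicate m false ++ true :: l₂) := by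
            apply congrArg; simp [List.replicate_succ]
        _ ≤ ω ((l₁ ++ [false]) ++ true :: List.replicate m false ++ l₂) := ih _ _
        _ = ω (l₁ ++ [false, true] ++ (List.replicate m false ++ l₂)) := by
            apply congrArg; simp
        _ ≤ ω (l₁ ++ [true, false] ++ (List.replicate m false ++ l₂)) := S _ _
        _ = ω (l₁ ++ true :: List.replicate (m+1) false ++ l₂) := by
            apply congrArg; simp [List.replicate_succ]
  -- moving a hole left across `m` particles decreases the weight
  have Mf : ∀ (m : ℕ) (l₁ l₂ : List Bool),
      ω (l₁ ++ false :: List.replicate m true ++ l₂)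
        ≤ ω (l₁ ++ List.replicate m true ++ false :: l₂) := by
    intro m
    induction m with
    | zero => intro l₁ l₂; simp
    | succ m ih =>
      intro l₁ l₂
      calc ω (l₁ ++ false :: List.replicate (m+1) true ++ l₂)
          = ω (l₁ ++ [false, true] ++ (List.replicate m true ++ l₂)) := by
            apply congrArg; simp [List.replicate_succ]
        _ ≤ ω (l₁ ++ [true, false] ++ (List.replicate m true ++ l₂)) := S _ _
        _ = ω ((l₁ ++ [true]) ++ false :: List.replicate m true ++ l₂) := by
            apply congrArg; simp
        _ ≤ ω ((l₁ ++ [true]) ++ List.replicate m true ++ false :: l₂) := ih _ _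
        _ = ω (l₁ ++ List.replicate (m+1) true ++ false :: l₂) := by
            apply congrArg; simp [List.replicate_succ]
  -- sorting a block with all particles at the left maximizes the weight
  have sortMax : ∀ (n : ℕ) (l : List Bool), l.length = n → ∀ l₁ l₂ : List Bool,
      ω (l₁ ++ l ++ l₂)
        ≤ ω (l₁ ++ (List.replicate (l.count true) true
              ++ List.replicate (l.count false) false) ++ l₂) := by
    intro n
    induction n using Nat.strong_induction_on with
    | _ n ih =>
      intro l hl l₁ l₂
      by_cases h0 : l.count true = 0
      · have hrep : ∀ b ∈ l, b = false := by
          intro b hb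
          cases b
          · rfl
          · exact absurd (List.count_pos_iff.mpr hb) (by omega)
        have hcf : l.count false = l.length := by
          rw [List.count_eq_length]; exact fun b hb => ((hrep b hb) ▸ rfl)
        apply le_of_eq
        apply congrArg
        rw [h0, hcf]
        simpa using (List.eq_replicate_of_mem hrep)
      · set p : Bool → Bool := fun b => b = false with hp
        set a := l.takeWhile p with ha
        set r := l.dropWhile p with hr
        have hsplit : a ++ r = l := List.takeWhile_append_dropWhile (p := p) (l := l)
        have hane : r ≠ [] := by
          intro h
          have hl' : l = a := by rw [← hsplit, h, List.append_nil]
          refine h0 (List.count_eq_zero.mpr fun ht => ?_)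
          have := List.mem_takeWhile_imp (hl' ▸ ht)
          simp [hp] at this
        have hhead : r.head hane = true := by
          have h1 := List.head_dropWhile_not p (l := l) hane
          cases hb : r.head hane
          · rw [hb] at h1; simp [hp] at h1
          · rfl
        have hrc : r = true :: r.tail := by
          conv_lhs => rw [← List.cons_head_tail (l := r) hane, hhead]
        set m := a.length with hm
        have harep : a = List.replicate m false := by
          apply List.eq_replicate_of_mem
          intro b hb
          have := List.mem_takeWhile_imp hb
          simpa [hp] using this
        have hleq : l = List.replicate m false ++ true :: r.tail := by
          rw [← hsplit, harep, ← hrc]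
        set t : List Bool := List.replicate m false ++ r.tail with htdef
        have hlt : t.length < n := by
          have : l.length = m + (1 + r.tail.length) := by
            rw [hleq]; simp [List.length_append]; omega
          have ht : t.length = m + r.tail.length := by simp [htdef]
          omega
        have hct : l.count true = t.count true + 1 := by
          rw [hleq]; simp [htdef, List.count_append, List.count_cons]
          try omega
        have hcf : l.count false = t.count false := by
          rw [hleq]; simp [htdef, List.count_append, List.count_cons]
          try omega
        calc ω (l₁ ++ l ++ l₂)
            = ω (l₁ ++ List.replicate m false ++ true :: (r.tail ++ l₂)) := by
              apply congrArg; rw [hleq]; simp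
          _ ≤ ω (l₁ ++ true :: List.replicate m false ++ (r.tail ++ l₂)) := Mt _ _ _
          _ = ω ((l₁ ++ [true]) ++ t ++ l₂) := by apply congrArg; simp [htdef]
          _ ≤ ω ((l₁ ++ [true]) ++ (List.replicate (t.count true) true
                ++ List.replicate (t.count false) false) ++ l₂) := ih _ hlt _ rfl _ _
          _ = ω (l₁ ++ (List.replicate (l.count true) true
                ++ List.replicate (l.count false) false) ++ l₂) := by
              apply congrArg
              rw [hct, hcf, List.replicate_succ]
              simp
  -- sorting a block with all particles at the right minimizes the weight
  have sortMin : ∀ (n : ℕ) (l : List Bool), l.length = n → ∀ l₁ l₂ : List Bool,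
      ω (l₁ ++ (List.replicate (l.count false) false
            ++ List.replicate (l.count true) true) ++ l₂)
        ≤ ω (l₁ ++ l ++ l₂) := by
    intro n
    induction n using Nat.strong_induction_on with
    | _ n ih =>
      intro l hl l₁ l₂
      by_cases h0 : l.count false = 0
      · have hrep : ∀ b ∈ l, b = true := by
          intro b hb
          cases b
          · exact absurd (List.count_pos_iff.mpr hb) (by omega)
          · rfl
        have hct : l.count true = l.length := by
          rw [List.count_eq_length]; exact fun b hb => ((hrep b hb) ▸ rfl)
        apply le_of_eq
        apply congrArg
        rw [h0, hct]
        simpa using (List.eq_replicate_of_mem hrep).symm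
      · set p : Bool → Bool := fun b => b = true with hp
        set a := l.takeWhile p with ha
        set r := l.dropWhile p with hr
        have hsplit : a ++ r = l := List.takeWhile_append_dropWhile (p := p) (l := l)
        have hane : r ≠ [] := by
          intro h
          have hl' : l = a := by rw [← hsplit, h, List.append_nil]
          refine h0 (List.count_eq_zero.mpr fun ht => ?_)
          have := List.mem_takeWhile_imp (hl' ▸ ht)
          simp [hp] at this
        have hhead : r.head hane = false := by
          have h1 := List.head_dropWhile_not p (l := l) hane
          cases hb : r.head hane
          · rfl
          · rw [hb] at h1; simp [hp] at h1
        have hrc : r = false :: r.tail := by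
          conv_lhs => rw [← List.cons_head_tail (l := r) hane, hhead]
        set m := a.length with hm
        have harep : a = List.replicate m true := by
          apply List.eq_replicate_of_mem
          intro b hb
          have := List.mem_takeWhile_imp hb
          simpa [hp] using this
        have hleq : l = List.replicate m true ++ false :: r.tail := by
          rw [← hsplit, harep, ← hrc]
        set t : List Bool := List.replicate m true ++ r.tail with htdef
        have hlt : t.length < n := by
          have : l.length = m + (1 + r.tail.length) := by
            rw [hleq]; simp [List.length_append]; omega
          have ht : t.length = m + r.tail.length := by simp [htdef]
          omega
        have hcf : l.count false = t.count false + 1 := by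
          rw [hleq]; simp [htdef, List.count_append, List.count_cons]
          try omega
        have hct : l.count true = t.count true := by
          rw [hleq]; simp [htdef, List.count_append, List.count_cons]
          try omega
        calc ω (l₁ ++ (List.replicate (l.count false) false
                ++ List.replicate (l.count true) true) ++ l₂)
            = ω ((l₁ ++ [false]) ++ (List.replicate (t.count false) false
                ++ List.replicate (t.count true) true) ++ l₂) := by
              apply congrArg
              rw [hcf, hct, List.replicate_succ]
              simp
          _ ≤ ω ((l₁ ++ [false]) ++ t ++ l₂) := ih _ hlt _ rfl _ _
          _ = ω (l₁ ++ false :: List.replicate m true ++ (r.tail ++ l₂)) := by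
              apply congrArg; simp [htdef]
          _ ≤ ω (l₁ ++ List.replicate m true ++ false :: (r.tail ++ l₂)) := Mf _ _ _
          _ = ω (l₁ ++ l ++ l₂) := by
              apply congrArg; rw [hleq]; simp
  -- count of falses in terms of length and count of trues
  have cnt : ∀ l : List Bool, l.count false + l.count true = l.length := by
    intro l; induction l with
    | nil => simp
    | cons h t ih => cases h <;> simp [List.count_cons] <;> omega
  -- the block comparison lemma
  have blockLem : ∀ (config : List (List Bool)) (blocks : List (ℕ × ℕ)),
      List.Forall₂
          (fun (b : List Bool) (p : ℕ × ℕ) => b.length = p.1 ∧ b.count true = p.2)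
          config blocks →
      (∀ p ∈ blocks, p.2 ≤ p.1) →
      ∀ l₁ : List Bool,
        (ω (l₁ ++ ((blocks.map fun p =>
              List.replicate (p.1 - p.2) false ++ List.replicate p.2 true).flatten))
          ≤ ω (l₁ ++ config.flatten) ∧
        ω (l₁ ++ config.flatten)
          ≤ ω (l₁ ++ ((blocks.map fun p =>
              List.replicate p.2 true ++ List.replicate (p.1 - p.2) false).flatten))) ∧
        config.flatten.length = (blocks.map Prod.fst).sum ∧
        ((blocks.map fun p =>
              List.replicate (p.1 - p.2) false
                ++ List.replicate p.2 true).flatten).length = (blocks.map Prod.fst).sum ∧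
        ((blocks.map fun p =>
              List.replicate p.2 true
                ++ List.replicate (p.1 - p.2) false).flatten).length
          = (blocks.map Prod.fst).sum := by
    intro config blocks hF
    induction hF with
    | nil => intro _ l₁; simp
    | @cons b p cs ps hbp hrest ih =>
      intro hle l₁
      obtain ⟨hlen, hcnt⟩ := hbp
      have hple : p.2 ≤ p.1 := hle p (by simp)
      have hle' : ∀ q ∈ ps, q.2 ≤ q.1 := fun q hq => hle q (by simp [hq])
      have hcf : b.count false = p.1 - p.2 := by
        have := cnt b; omega
      have ihineq := fun l₁ => (ih hle' l₁).1
      obtain ⟨ihlen1, ihlen2, ihlen3⟩ := (ih hle' []).2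
      constructor
      · constructor
        · -- lower bound
          calc ω (l₁ ++ (((p :: ps).map fun p =>
                  List.replicate (p.1 - p.2) false ++ List.replicate p.2 true).flatten))
              = ω ((l₁ ++ (List.replicate (p.1 - p.2) false ++ List.replicate p.2 true))
                  ++ ((ps.map fun p =>
                  List.replicate (p.1 - p.2) false ++ List.replicate p.2 true).flatten)) := by
                apply congrArg; simp
            _ ≤ ω ((l₁ ++ (List.replicate (p.1 - p.2) false ++ List.replicate p.2 true))
                  ++ cs.flatten) :=
                (ihineq (l₁ ++ (List.replicate (p.1 - p.2) false
                  ++ List.replicate p.2 true))).1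
            _ = ω (l₁ ++ (List.replicate (b.count false) false
                  ++ List.replicate (b.count true) true) ++ cs.flatten) := by
                apply congrArg; rw [hcf, hcnt]
            _ ≤ ω (l₁ ++ b ++ cs.flatten) := sortMin _ b rfl _ _
            _ = ω (l₁ ++ (b :: cs).flatten) := by apply congrArg; simp
        · -- upper bound
          calc ω (l₁ ++ (b :: cs).flatten)
              = ω (l₁ ++ b ++ cs.flatten) := by apply congrArg; simp
            _ ≤ ω (l₁ ++ (List.replicate (b.count true) true
                  ++ List.replicate (b.count false) false) ++ cs.flatten) :=
                sortMax _ b rfl _ _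
            _ = ω ((l₁ ++ (List.replicate p.2 true ++ List.replicate (p.1 - p.2) false))
                  ++ cs.flatten) := by
                apply congrArg; rw [hcf, hcnt]
            _ ≤ ω ((l₁ ++ (List.replicate p.2 true ++ List.replicate (p.1 - p.2) false))
                  ++ ((ps.map fun p =>
                  List.replicate p.2 true ++ List.replicate (p.1 - p.2) false).flatten)) :=
                (ihineq _).2
            _ = ω (l₁ ++ (((p :: ps).map fun p =>
                  List.replicate p.2 true ++ List.replicate (p.1 - p.2) false).flatten)) := by
                apply congrArg; simp
      · refine ⟨?_, ?_, ?_⟩ <;> simp [List.length_append, ihlen1, ihlen2, ihlen3]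
          <;> omega
  refine ⟨fun l₁ l₂ => ⟨key l₁ l₂, S l₁ l₂⟩, ?_⟩
  intro blocks hle config hF
  obtain ⟨⟨h1, h2⟩, hl1, hl2, hl3⟩ := blockLem config blocks hF hle []
  simp only [List.nil_append] at h1 h2
  have hZpos := hZ ((blocks.map Prod.fst).sum)
  constructor
  · show μ _ ≤ μ _
    simp only [μ, hl1, hl2]
    exact div_le_div_of_nonneg_right h1 hZpos.le
  · show μ _ ≤ μ _
    simp only [μ, hl1, hl3]
    exact div_le_div_of_nonneg_right h2 hZpos.le
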